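/- arXiv:math/0604441 — 3 statements merged into one kernel-verified Lean document; each statement's English description precedes it below -/
import Mathlib

section
/- For every 2-form ω = Σ_{i<j} ω_{ij} e_i∧e_j on ℝ⁷, the Clifford action satisfies σ(ω)ψ₁ = 0 if and only if the following seven linear equations hold: ω₁₂+ω₃₄+ω₅₆ = 0, −ω₁₃+ω₂₄−ω₆₇ = 0, −ω₁₄−ω₂₃−ω₅₇ = 0, −ω₁₆−ω₂₅+ω₃₇ = 0, ω₁₅−ω₂₆−ω₄₇ = 0, ω₁₇+ω₃₆+ω₄₅ = 0, ω₂₇+ω₃₅−ω₄₆ = 0. (These equations define the Lie algebra g₂ inside spin(7).) -/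
open Matrix BigOperators

noncomputable section

abbrev M8 : Type := Matrix (Fin 8) (Fin 8) ℝ

/-- 2-forms on ℝ⁷ -/
abbrev Lam2 : Type := AlternatingMap ℝ (Fin 7 → ℝ) ℝ (Fin 2)

/-- 3-forms on ℝ⁷ -/
abbrev Lam3 : Type := AlternatingMap ℝ (Fin 7 → ℝ) ℝ (Fin 3)

/-- standard basis of ℝ⁷ -/
def u (i : Fin 7) : Fin 7 → ℝ := Pi.single i 1

/-- standard spinor basis ψ₁,…,ψ₈ (0-indexed) -/
def ψ (k : Fin 8) : Fin 8 → ℝ := Pi.single k 1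

/-- E_{ij} : ψ_i ↦ ψ_j, ψ_j ↦ -ψ_i -/
def EE (i j : Fin 8) : M8 := Matrix.single j i 1 - Matrix.single i j 1

/-- Clifford multiplication by e₁,…,e₇ (0-indexed) -/
def e : Fin 7 → M8 :=
  ![EE 0 7 + EE 1 6 - EE 2 5 - EE 3 4,
    -EE 0 6 + EE 1 7 + EE 2 4 - EE 3 5,
    -EE 0 5 + EE 1 4 - EE 2 7 + EE 3 6,
    -EE 0 4 - EE 1 5 - EE 2 6 - EE 3 7,
    -EE 0 2 - EE 1 3 + EE 4 6 + EE 5 7,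
    EE 0 3 - EE 1 2 - EE 4 7 + EE 5 6,
    EE 0 1 - EE 2 3 - EE 4 5 + EE 6 7]

def pick2 (i j : Fin 7) : (Fin 7 → ℝ) →ₗ[ℝ] (Fin 2 → ℝ) :=
  LinearMap.pi fun m => LinearMap.proj (![i, j] m)

def pick3 (i j k : Fin 7) : (Fin 7 → ℝ) →ₗ[ℝ] (Fin 3 → ℝ) :=
  LinearMap.pi fun m => LinearMap.proj (![i, j, k] m)

/-- the 2-form e_i ∧ e_j -/
def w2 (i j : Fin 7) : Lam2 :=
  (Matrix.detRowAlternating : AlternatingMap ℝ (Fin 2 → ℝ) ℝ (Fin 2)).compLinearMap (pick2 i j)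

/-- the 3-form e_i ∧ e_j ∧ e_k -/
def w3 (i j k : Fin 7) : Lam3 :=
  (Matrix.detRowAlternating : AlternatingMap ℝ (Fin 3 → ℝ) ℝ (Fin 3)).compLinearMap (pick3 i j k)

/-- Clifford action of a 2-form -/
def σ2 (ω : Lam2) : M8 :=
  ∑ i : Fin 7, ∑ j : Fin 7, if i < j then ω ![u i, u j] • (e i * e j) else 0

/-- Clifford action of a 3-form -/
def σ3 (T : Lam3) : M8 :=
  ∑ i : Fin 7, ∑ j : Fin 7, ∑ k : Fin 7,
    if i < j ∧ j < k then T ![u i, u j, u k] • (e i * e j * e k) else 0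

/-- the skew-symmetric 7×7 matrix A_ω associated to a 2-form ω -/
def A2 (ω : Lam2) : Matrix (Fin 7) (Fin 7) ℝ :=
  ∑ i : Fin 7, ∑ j : Fin 7,
    if i < j then ω ![u i, u j] •
      (Matrix.single j i (1 : ℝ) - Matrix.single i j 1) else 0

/-- T is ω-invariant: the natural action of the 2-form ω on the 3-form T vanishes -/
def inv3 (ω : Lam2) (T : Lam3) : Prop :=
  ∀ X Y Z : Fin 7 → ℝ,
    T ![A2 ω *ᵥ X, Y, Z] + T ![X, A2 ω *ᵥ Y, Z] + T ![X, Y, A2 ω *ᵥ Z] = 0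

/-- the standard G₂ 3-form φ = e₁₂₇+e₁₃₅−e₁₄₆−e₂₃₆−e₂₄₅+e₃₄₇+e₅₆₇ -/
def φf : Lam3 :=
  w3 0 1 6 + w3 0 2 4 - w3 0 3 5 - w3 1 2 5 - w3 1 3 4 + w3 2 3 6 + w3 4 5 6


lemma std_mv (p q : Fin 8) (x : Fin 8 → ℝ) :
    Matrix.single p q (1:ℝ) *ᵥ x = x q • ψ p := by
  ext m
  simp [Matrix.mulVec, dotProduct, Matrix.single, ψ, Pi.single_apply, ite_and]
  by_cases h : m = p
  · simp [h, mul_comm]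
  · simp [h]; intro hh; exact absurd hh.symm h

lemma EE_mv (a b : Fin 8) (x : Fin 8 → ℝ) :
    EE a b *ᵥ x = x a • ψ b - x b • ψ a := by
  simp [EE, Matrix.sub_mulVec, std_mv]

lemma e0_mv (x : Fin 8 → ℝ) : e 0 *ᵥ x =
    (x 0 • ψ 7 - x 7 • ψ 0) + (x 1 • ψ 6 - x 6 • ψ 1)
      - (x 2 • ψ 5 - x 5 • ψ 2) - (x 3 • ψ 4 - x 4 • ψ 3) := by
  show (EE 0 7 + EE 1 6 - EE 2 5 - EE 3 4) *ᵥ x = _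
  simp only [Matrix.add_mulVec, Matrix.sub_mulVec, Matrix.neg_mulVec, EE_mv]

lemma e1_mv (x : Fin 8 → ℝ) : e 1 *ᵥ x = -(x 0 • ψ 6 - x 6 • ψ 0) + (x 1 • ψ 7 - x 7 • ψ 1) + (x 2 • ψ 4 - x 4 • ψ 2) - (x 3 • ψ 5 - x 5 • ψ 3) := by
  show (-EE 0 6 + EE 1 7 + EE 2 4 - EE 3 5) *ᵥ x = _
  simp only [Matrix.add_mulVec, Matrix.sub_mulVec, Matrix.neg_mulVec, EE_mv]

lemma e2_mv (x : Fin 8 → ℝ) : e 2 *ᵥ x = -(x 0 • ψ 5 - x 5 • ψ 0) + (x 1 • ψ 4 - x 4 • ψ 1) - (x 2 • ψ 7 - x 7 • ψ 2) + (x 3 • ψ 6 - x 6 • ψ 3) := by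
  show (-EE 0 5 + EE 1 4 - EE 2 7 + EE 3 6) *ᵥ x = _
  simp only [Matrix.add_mulVec, Matrix.sub_mulVec, Matrix.neg_mulVec, EE_mv]

lemma e3_mv (x : Fin 8 → ℝ) : e 3 *ᵥ x = -(x 0 • ψ 4 - x 4 • ψ 0) - (x 1 • ψ 5 - x 5 • ψ 1) - (x 2 • ψ 6 - x 6 • ψ 2) - (x 3 • ψ 7 - x 7 • ψ 3) := by
  show (-EE 0 4 - EE 1 5 - EE 2 6 - EE 3 7) *ᵥ x = _
  simp only [Matrix.add_mulVec, Matrix.sub_mulVec, Matrix.neg_mulVec, EE_mv]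

lemma e4_mv (x : Fin 8 → ℝ) : e 4 *ᵥ x = -(x 0 • ψ 2 - x 2 • ψ 0) - (x 1 • ψ 3 - x 3 • ψ 1) + (x 4 • ψ 6 - x 6 • ψ 4) + (x 5 • ψ 7 - x 7 • ψ 5) := by
  show (-EE 0 2 - EE 1 3 + EE 4 6 + EE 5 7) *ᵥ x = _
  simp only [Matrix.add_mulVec, Matrix.sub_mulVec, Matrix.neg_mulVec, EE_mv]

lemma e5_mv (x : Fin 8 → ℝ) : e 5 *ᵥ x = (x 0 • ψ 3 - x 3 • ψ 0) - (x 1 • ψ 2 - x 2 • ψ 1) - (x 4 • ψ 7 - x 7 • ψ 4) + (x 5 • ψ 6 - x 6 • ψ 5) := by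
  show (EE 0 3 - EE 1 2 - EE 4 7 + EE 5 6) *ᵥ x = _
  simp only [Matrix.add_mulVec, Matrix.sub_mulVec, Matrix.neg_mulVec, EE_mv]

lemma e6_mv (x : Fin 8 → ℝ) : e 6 *ᵥ x = (x 0 • ψ 1 - x 1 • ψ 0) - (x 2 • ψ 3 - x 3 • ψ 2) - (x 4 • ψ 5 - x 5 • ψ 4) + (x 6 • ψ 7 - x 7 • ψ 6) := by
  show (EE 0 1 - EE 2 3 - EE 4 5 + EE 6 7) *ᵥ x = _
  simp only [Matrix.add_mulVec, Matrix.sub_mulVec, Matrix.neg_mulVec, EE_mv]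

/-- σ(ω)ψ₁ = 0 iff the seven linear equations defining g₂ ⊂ spin(7) hold. -/
theorem stmt_0 (ω : Lam2) :
    σ2 ω *ᵥ ψ 0 = 0 ↔
      (ω ![u 0, u 1] + ω ![u 2, u 3] + ω ![u 4, u 5] = 0 ∧
       -ω ![u 0, u 2] + ω ![u 1, u 3] - ω ![u 5, u 6] = 0 ∧
       -ω ![u 0, u 3] - ω ![u 1, u 2] - ω ![u 4, u 6] = 0 ∧
       -ω ![u 0, u 5] - ω ![u 1, u 4] + ω ![u 2, u 6] = 0 ∧
       ω ![u 0, u 4] - ω ![u 1, u 5] - ω ![u 3, u 6] = 0 ∧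
       ω ![u 0, u 6] + ω ![u 2, u 5] + ω ![u 3, u 4] = 0 ∧
       ω ![u 1, u 6] + ω ![u 2, u 4] - ω ![u 3, u 5] = 0) := by
  unfold σ2
  simp only [Fin.sum_univ_seven]
  simp (config := { decide := true }) only [Matrix.smul_mulVec,
    ← Matrix.mulVec_mulVec, Matrix.add_mulVec, Matrix.zero_mulVec]
  norm_num [Matrix.add_mulVec, Matrix.smul_mulVec, ← Matrix.mulVec_mulVec]
  simp only [e0_mv, e1_mv, e2_mv, e3_mv, e4_mv, e5_mv, e6_mv]
  simp (config := { decide := true }) only [ψ, Pi.sub_apply, Pi.add_apply, Pi.neg_apply,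
    Pi.smul_apply, Pi.zero_apply, Pi.single_apply, smul_eq_mul, apply_ite, ite_apply]
  try norm_num
  rw [funext_iff]
  constructor
  · intro h
    have h1 := h 1; have h2 := h 2; have h3 := h 3; have h4 := h 4
    have h5 := h 5; have h6 := h 6; have h7 := h 7
    simp (config := { decide := true }) only [Pi.add_apply, Pi.neg_apply, Pi.smul_apply,
      Pi.single_apply, Pi.zero_apply, smul_eq_mul, if_true, if_false, mul_one, mul_zero, add_zero, zero_add,
      neg_zero, neg_neg] at h1 h2 h3 h4 h5 h6 h7
    refine ⟨by linarith, by linarith, by linarith, by linarith, by linarith, by linarith,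
      by linarith⟩
  · rintro ⟨h1, h2, h3, h4, h5, h6, h7⟩ k
    fin_cases k <;>
      simp (config := { decide := true }) only [Pi.add_apply, Pi.neg_apply, Pi.smul_apply,
        Pi.single_apply, Pi.zero_apply, smul_eq_mul, if_true, if_false, mul_one, mul_zero, add_zero, zero_add,
        neg_zero, neg_neg] <;>
      linarith
end
end

section
/- The set g₂ := {2-forms ω on ℝ⁷ : σ(ω)ψ₁ = 0} is a linear subspace of Λ²(ℝ⁷) of dimension 14, and its Clifford image {σ(ω) : ω ∈ g₂} is closed under the matrix commutator, i.e. it is a 14-dimensional Lie subalgebra of the 8×8 real matrices. -/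
open Matrix BigOperators

noncomputable section

-- ===== auxiliary material =====

def eZ : Fin 7 → Matrix (Fin 8) (Fin 8) ℤ :=
  ![!![0, 0, 0, 0, 0, 0, 0, -1; 0, 0, 0, 0, 0, 0, -1, 0; 0, 0, 0, 0, 0, 1, 0, 0; 0, 0, 0, 0, 1, 0, 0, 0; 0, 0, 0, -1, 0, 0, 0, 0; 0, 0, -1, 0, 0, 0, 0, 0; 0, 1, 0, 0, 0, 0, 0, 0; 1, 0, 0, 0, 0, 0, 0, 0],
    !![0, 0, 0, 0, 0, 0, 1, 0; 0, 0, 0, 0, 0, 0, 0, -1; 0, 0, 0, 0, -1, 0, 0, 0; 0, 0, 0, 0, 0, 1, 0, 0; 0, 0, 1, 0, 0, 0, 0, 0; 0, 0, 0, -1, 0, 0, 0, 0; -1, 0, 0, 0, 0, 0, 0, 0; 0, 1, 0, 0, 0, 0, 0, 0],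
    !![0, 0, 0, 0, 0, 1, 0, 0; 0, 0, 0, 0, -1, 0, 0, 0; 0, 0, 0, 0, 0, 0, 0, 1; 0, 0, 0, 0, 0, 0, -1, 0; 0, 1, 0, 0, 0, 0, 0, 0; -1, 0, 0, 0, 0, 0, 0, 0; 0, 0, 0, 1, 0, 0, 0, 0; 0, 0, -1, 0, 0, 0, 0, 0],
    !![0, 0, 0, 0, 1, 0, 0, 0; 0, 0, 0, 0, 0, 1, 0, 0; 0, 0, 0, 0, 0, 0, 1, 0; 0, 0, 0, 0, 0, 0, 0, 1; -1, 0, 0, 0, 0, 0, 0, 0; 0, -1, 0, 0, 0, 0, 0, 0; 0, 0, -1, 0, 0, 0, 0, 0; 0, 0, 0, -1, 0, 0, 0, 0],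
    !![0, 0, 1, 0, 0, 0, 0, 0; 0, 0, 0, 1, 0, 0, 0, 0; -1, 0, 0, 0, 0, 0, 0, 0; 0, -1, 0, 0, 0, 0, 0, 0; 0, 0, 0, 0, 0, 0, -1, 0; 0, 0, 0, 0, 0, 0, 0, -1; 0, 0, 0, 0, 1, 0, 0, 0; 0, 0, 0, 0, 0, 1, 0, 0],
    !![0, 0, 0, -1, 0, 0, 0, 0; 0, 0, 1, 0, 0, 0, 0, 0; 0, -1, 0, 0, 0, 0, 0, 0; 1, 0, 0, 0, 0, 0, 0, 0; 0, 0, 0, 0, 0, 0, 0, 1; 0, 0, 0, 0, 0, 0, -1, 0; 0, 0, 0, 0, 0, 1, 0, 0; 0, 0, 0, 0, -1, 0, 0, 0],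
    !![0, -1, 0, 0, 0, 0, 0, 0; 1, 0, 0, 0, 0, 0, 0, 0; 0, 0, 0, 1, 0, 0, 0, 0; 0, 0, -1, 0, 0, 0, 0, 0; 0, 0, 0, 0, 0, 1, 0, 0; 0, 0, 0, 0, -1, 0, 0, 0; 0, 0, 0, 0, 0, 0, 0, -1; 0, 0, 0, 0, 0, 0, 1, 0]]

def gZ : Fin 7 → Fin 7 → Matrix (Fin 8) (Fin 8) ℤ :=
  ![![!![-1, 0, 0, 0, 0, 0, 0, 0; 0, -1, 0, 0, 0, 0, 0, 0; 0, 0, -1, 0, 0, 0, 0, 0; 0, 0, 0, -1, 0, 0, 0, 0; 0, 0, 0, 0, -1, 0, 0, 0; 0, 0, 0, 0, 0, -1, 0, 0; 0, 0, 0, 0, 0, 0, -1, 0; 0, 0, 0, 0, 0, 0, 0, -1],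
  !![0, -1, 0, 0, 0, 0, 0, 0; 1, 0, 0, 0, 0, 0, 0, 0; 0, 0, 0, -1, 0, 0, 0, 0; 0, 0, 1, 0, 0, 0, 0, 0; 0, 0, 0, 0, 0, -1, 0, 0; 0, 0, 0, 0, 1, 0, 0, 0; 0, 0, 0, 0, 0, 0, 0, -1; 0, 0, 0, 0, 0, 0, 1, 0],
  !![0, 0, 1, 0, 0, 0, 0, 0; 0, 0, 0, -1, 0, 0, 0, 0; -1, 0, 0, 0, 0, 0, 0, 0; 0, 1, 0, 0, 0, 0, 0, 0; 0, 0, 0, 0, 0, 0, 1, 0; 0, 0, 0, 0, 0, 0, 0, -1; 0, 0, 0, 0, -1, 0, 0, 0; 0, 0, 0, 0, 0, 1, 0, 0],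
  !![0, 0, 0, 1, 0, 0, 0, 0; 0, 0, 1, 0, 0, 0, 0, 0; 0, -1, 0, 0, 0, 0, 0, 0; -1, 0, 0, 0, 0, 0, 0, 0; 0, 0, 0, 0, 0, 0, 0, -1; 0, 0, 0, 0, 0, 0, -1, 0; 0, 0, 0, 0, 0, 1, 0, 0; 0, 0, 0, 0, 1, 0, 0, 0],
  !![0, 0, 0, 0, 0, -1, 0, 0; 0, 0, 0, 0, -1, 0, 0, 0; 0, 0, 0, 0, 0, 0, 0, -1; 0, 0, 0, 0, 0, 0, -1, 0; 0, 1, 0, 0, 0, 0, 0, 0; 1, 0, 0, 0, 0, 0, 0, 0; 0, 0, 0, 1, 0, 0, 0, 0; 0, 0, 1, 0, 0, 0, 0, 0],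
  !![0, 0, 0, 0, 1, 0, 0, 0; 0, 0, 0, 0, 0, -1, 0, 0; 0, 0, 0, 0, 0, 0, -1, 0; 0, 0, 0, 0, 0, 0, 0, 1; -1, 0, 0, 0, 0, 0, 0, 0; 0, 1, 0, 0, 0, 0, 0, 0; 0, 0, 1, 0, 0, 0, 0, 0; 0, 0, 0, -1, 0, 0, 0, 0],
  !![0, 0, 0, 0, 0, 0, -1, 0; 0, 0, 0, 0, 0, 0, 0, 1; 0, 0, 0, 0, -1, 0, 0, 0; 0, 0, 0, 0, 0, 1, 0, 0; 0, 0, 1, 0, 0, 0, 0, 0; 0, 0, 0, -1, 0, 0, 0, 0; 1, 0, 0, 0, 0, 0, 0, 0; 0, -1, 0, 0, 0, 0, 0, 0]],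
 ![!![0, 1, 0, 0, 0, 0, 0, 0; -1, 0, 0, 0, 0, 0, 0, 0; 0, 0, 0, 1, 0, 0, 0, 0; 0, 0, -1, 0, 0, 0, 0, 0; 0, 0, 0, 0, 0, 1, 0, 0; 0, 0, 0, 0, -1, 0, 0, 0; 0, 0, 0, 0, 0, 0, 0, 1; 0, 0, 0, 0, 0, 0, -1, 0],
  !![-1, 0, 0, 0, 0, 0, 0, 0; 0, -1, 0, 0, 0, 0, 0, 0; 0, 0, -1, 0, 0, 0, 0, 0; 0, 0, 0, -1, 0, 0, 0, 0; 0, 0, 0, 0, -1, 0, 0, 0; 0, 0, 0, 0, 0, -1, 0, 0; 0, 0, 0, 0, 0, 0, -1, 0; 0, 0, 0, 0, 0, 0, 0, -1],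
  !![0, 0, 0, 1, 0, 0, 0, 0; 0, 0, 1, 0, 0, 0, 0, 0; 0, -1, 0, 0, 0, 0, 0, 0; -1, 0, 0, 0, 0, 0, 0, 0; 0, 0, 0, 0, 0, 0, 0, 1; 0, 0, 0, 0, 0, 0, 1, 0; 0, 0, 0, 0, 0, -1, 0, 0; 0, 0, 0, 0, -1, 0, 0, 0],
  !![0, 0, -1, 0, 0, 0, 0, 0; 0, 0, 0, 1, 0, 0, 0, 0; 1, 0, 0, 0, 0, 0, 0, 0; 0, -1, 0, 0, 0, 0, 0, 0; 0, 0, 0, 0, 0, 0, 1, 0; 0, 0, 0, 0, 0, 0, 0, -1; 0, 0, 0, 0, -1, 0, 0, 0; 0, 0, 0, 0, 0, 1, 0, 0],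
  !![0, 0, 0, 0, 1, 0, 0, 0; 0, 0, 0, 0, 0, -1, 0, 0; 0, 0, 0, 0, 0, 0, 1, 0; 0, 0, 0, 0, 0, 0, 0, -1; -1, 0, 0, 0, 0, 0, 0, 0; 0, 1, 0, 0, 0, 0, 0, 0; 0, 0, -1, 0, 0, 0, 0, 0; 0, 0, 0, 1, 0, 0, 0, 0],
  !![0, 0, 0, 0, 0, 1, 0, 0; 0, 0, 0, 0, 1, 0, 0, 0; 0, 0, 0, 0, 0, 0, 0, -1; 0, 0, 0, 0, 0, 0, -1, 0; 0, -1, 0, 0, 0, 0, 0, 0; -1, 0, 0, 0, 0, 0, 0, 0; 0, 0, 0, 1, 0, 0, 0, 0; 0, 0, 1, 0, 0, 0, 0, 0],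
  !![0, 0, 0, 0, 0, 0, 0, -1; 0, 0, 0, 0, 0, 0, -1, 0; 0, 0, 0, 0, 0, -1, 0, 0; 0, 0, 0, 0, -1, 0, 0, 0; 0, 0, 0, 1, 0, 0, 0, 0; 0, 0, 1, 0, 0, 0, 0, 0; 0, 1, 0, 0, 0, 0, 0, 0; 1, 0, 0, 0, 0, 0, 0, 0]],
 ![!![0, 0, -1, 0, 0, 0, 0, 0; 0, 0, 0, 1, 0, 0, 0, 0; 1, 0, 0, 0, 0, 0, 0, 0; 0, -1, 0, 0, 0, 0, 0, 0; 0, 0, 0, 0, 0, 0, -1, 0; 0, 0, 0, 0, 0, 0, 0, 1; 0, 0, 0, 0, 1, 0, 0, 0; 0, 0, 0, 0, 0, -1, 0, 0],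
  !![0, 0, 0, -1, 0, 0, 0, 0; 0, 0, -1, 0, 0, 0, 0, 0; 0, 1, 0, 0, 0, 0, 0, 0; 1, 0, 0, 0, 0, 0, 0, 0; 0, 0, 0, 0, 0, 0, 0, -1; 0, 0, 0, 0, 0, 0, -1, 0; 0, 0, 0, 0, 0, 1, 0, 0; 0, 0, 0, 0, 1, 0, 0, 0],
  !![-1, 0, 0, 0, 0, 0, 0, 0; 0, -1, 0, 0, 0, 0, 0, 0; 0, 0, -1, 0, 0, 0, 0, 0; 0, 0, 0, -1, 0, 0, 0, 0; 0, 0, 0, 0, -1, 0, 0, 0; 0, 0, 0, 0, 0, -1, 0, 0; 0, 0, 0, 0, 0, 0, -1, 0; 0, 0, 0, 0, 0, 0, 0, -1],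
  !![0, -1, 0, 0, 0, 0, 0, 0; 1, 0, 0, 0, 0, 0, 0, 0; 0, 0, 0, -1, 0, 0, 0, 0; 0, 0, 1, 0, 0, 0, 0, 0; 0, 0, 0, 0, 0, 1, 0, 0; 0, 0, 0, 0, -1, 0, 0, 0; 0, 0, 0, 0, 0, 0, 0, 1; 0, 0, 0, 0, 0, 0, -1, 0],
  !![0, 0, 0, 0, 0, 0, 0, -1; 0, 0, 0, 0, 0, 0, 1, 0; 0, 0, 0, 0, 0, 1, 0, 0; 0, 0, 0, 0, -1, 0, 0, 0; 0, 0, 0, 1, 0, 0, 0, 0; 0, 0, -1, 0, 0, 0, 0, 0; 0, -1, 0, 0, 0, 0, 0, 0; 1, 0, 0, 0, 0, 0, 0, 0],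
  !![0, 0, 0, 0, 0, 0, -1, 0; 0, 0, 0, 0, 0, 0, 0, -1; 0, 0, 0, 0, -1, 0, 0, 0; 0, 0, 0, 0, 0, -1, 0, 0; 0, 0, 1, 0, 0, 0, 0, 0; 0, 0, 0, 1, 0, 0, 0, 0; 1, 0, 0, 0, 0, 0, 0, 0; 0, 1, 0, 0, 0, 0, 0, 0],
  !![0, 0, 0, 0, -1, 0, 0, 0; 0, 0, 0, 0, 0, -1, 0, 0; 0, 0, 0, 0, 0, 0, 1, 0; 0, 0, 0, 0, 0, 0, 0, 1; 1, 0, 0, 0, 0, 0, 0, 0; 0, 1, 0, 0, 0, 0, 0, 0; 0, 0, -1, 0, 0, 0, 0, 0; 0, 0, 0, -1, 0, 0, 0, 0]],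
 ![!![0, 0, 0, -1, 0, 0, 0, 0; 0, 0, -1, 0, 0, 0, 0, 0; 0, 1, 0, 0, 0, 0, 0, 0; 1, 0, 0, 0, 0, 0, 0, 0; 0, 0, 0, 0, 0, 0, 0, 1; 0, 0, 0, 0, 0, 0, 1, 0; 0, 0, 0, 0, 0, -1, 0, 0; 0, 0, 0, 0, -1, 0, 0, 0],
  !![0, 0, 1, 0, 0, 0, 0, 0; 0, 0, 0, -1, 0, 0, 0, 0; -1, 0, 0, 0, 0, 0, 0, 0; 0, 1, 0, 0, 0, 0, 0, 0; 0, 0, 0, 0, 0, 0, -1, 0; 0, 0, 0, 0, 0, 0, 0, 1; 0, 0, 0, 0, 1, 0, 0, 0; 0, 0, 0, 0, 0, -1, 0, 0],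
  !![0, 1, 0, 0, 0, 0, 0, 0; -1, 0, 0, 0, 0, 0, 0, 0; 0, 0, 0, 1, 0, 0, 0, 0; 0, 0, -1, 0, 0, 0, 0, 0; 0, 0, 0, 0, 0, -1, 0, 0; 0, 0, 0, 0, 1, 0, 0, 0; 0, 0, 0, 0, 0, 0, 0, -1; 0, 0, 0, 0, 0, 0, 1, 0],
  !![-1, 0, 0, 0, 0, 0, 0, 0; 0, -1, 0, 0, 0, 0, 0, 0; 0, 0, -1, 0, 0, 0, 0, 0; 0, 0, 0, -1, 0, 0, 0, 0; 0, 0, 0, 0, -1, 0, 0, 0; 0, 0, 0, 0, 0, -1, 0, 0; 0, 0, 0, 0, 0, 0, -1, 0; 0, 0, 0, 0, 0, 0, 0, -1],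
  !![0, 0, 0, 0, 0, 0, -1, 0; 0, 0, 0, 0, 0, 0, 0, -1; 0, 0, 0, 0, 1, 0, 0, 0; 0, 0, 0, 0, 0, 1, 0, 0; 0, 0, -1, 0, 0, 0, 0, 0; 0, 0, 0, -1, 0, 0, 0, 0; 1, 0, 0, 0, 0, 0, 0, 0; 0, 1, 0, 0, 0, 0, 0, 0],
  !![0, 0, 0, 0, 0, 0, 0, 1; 0, 0, 0, 0, 0, 0, -1, 0; 0, 0, 0, 0, 0, 1, 0, 0; 0, 0, 0, 0, -1, 0, 0, 0; 0, 0, 0, 1, 0, 0, 0, 0; 0, 0, -1, 0, 0, 0, 0, 0; 0, 1, 0, 0, 0, 0, 0, 0; -1, 0, 0, 0, 0, 0, 0, 0],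
  !![0, 0, 0, 0, 0, 1, 0, 0; 0, 0, 0, 0, -1, 0, 0, 0; 0, 0, 0, 0, 0, 0, 0, -1; 0, 0, 0, 0, 0, 0, 1, 0; 0, 1, 0, 0, 0, 0, 0, 0; -1, 0, 0, 0, 0, 0, 0, 0; 0, 0, 0, -1, 0, 0, 0, 0; 0, 0, 1, 0, 0, 0, 0, 0]],
 ![!![0, 0, 0, 0, 0, 1, 0, 0; 0, 0, 0, 0, 1, 0, 0, 0; 0, 0, 0, 0, 0, 0, 0, 1; 0, 0, 0, 0, 0, 0, 1, 0; 0, -1, 0, 0, 0, 0, 0, 0; -1, 0, 0, 0, 0, 0, 0, 0; 0, 0, 0, -1, 0, 0, 0, 0; 0, 0, -1, 0, 0, 0, 0, 0],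
  !![0, 0, 0, 0, -1, 0, 0, 0; 0, 0, 0, 0, 0, 1, 0, 0; 0, 0, 0, 0, 0, 0, -1, 0; 0, 0, 0, 0, 0, 0, 0, 1; 1, 0, 0, 0, 0, 0, 0, 0; 0, -1, 0, 0, 0, 0, 0, 0; 0, 0, 1, 0, 0, 0, 0, 0; 0, 0, 0, -1, 0, 0, 0, 0],
  !![0, 0, 0, 0, 0, 0, 0, 1; 0, 0, 0, 0, 0, 0, -1, 0; 0, 0, 0, 0, 0, -1, 0, 0; 0, 0, 0, 0, 1, 0, 0, 0; 0, 0, 0, -1, 0, 0, 0, 0; 0, 0, 1, 0, 0, 0, 0, 0; 0, 1, 0, 0, 0, 0, 0, 0; -1, 0, 0, 0, 0, 0, 0, 0],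
  !![0, 0, 0, 0, 0, 0, 1, 0; 0, 0, 0, 0, 0, 0, 0, 1; 0, 0, 0, 0, -1, 0, 0, 0; 0, 0, 0, 0, 0, -1, 0, 0; 0, 0, 1, 0, 0, 0, 0, 0; 0, 0, 0, 1, 0, 0, 0, 0; -1, 0, 0, 0, 0, 0, 0, 0; 0, -1, 0, 0, 0, 0, 0, 0],
  !![-1, 0, 0, 0, 0, 0, 0, 0; 0, -1, 0, 0, 0, 0, 0, 0; 0, 0, -1, 0, 0, 0, 0, 0; 0, 0, 0, -1, 0, 0, 0, 0; 0, 0, 0, 0, -1, 0, 0, 0; 0, 0, 0, 0, 0, -1, 0, 0; 0, 0, 0, 0, 0, 0, -1, 0; 0, 0, 0, 0, 0, 0, 0, -1],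
  !![0, -1, 0, 0, 0, 0, 0, 0; 1, 0, 0, 0, 0, 0, 0, 0; 0, 0, 0, 1, 0, 0, 0, 0; 0, 0, -1, 0, 0, 0, 0, 0; 0, 0, 0, 0, 0, -1, 0, 0; 0, 0, 0, 0, 1, 0, 0, 0; 0, 0, 0, 0, 0, 0, 0, 1; 0, 0, 0, 0, 0, 0, -1, 0],
  !![0, 0, 0, 1, 0, 0, 0, 0; 0, 0, -1, 0, 0, 0, 0, 0; 0, 1, 0, 0, 0, 0, 0, 0; -1, 0, 0, 0, 0, 0, 0, 0; 0, 0, 0, 0, 0, 0, 0, 1; 0, 0, 0, 0, 0, 0, -1, 0; 0, 0, 0, 0, 0, 1, 0, 0; 0, 0, 0, 0, -1, 0, 0, 0]],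
 ![!![0, 0, 0, 0, -1, 0, 0, 0; 0, 0, 0, 0, 0, 1, 0, 0; 0, 0, 0, 0, 0, 0, 1, 0; 0, 0, 0, 0, 0, 0, 0, -1; 1, 0, 0, 0, 0, 0, 0, 0; 0, -1, 0, 0, 0, 0, 0, 0; 0, 0, -1, 0, 0, 0, 0, 0; 0, 0, 0, 1, 0, 0, 0, 0],
  !![0, 0, 0, 0, 0, -1, 0, 0; 0, 0, 0, 0, -1, 0, 0, 0; 0, 0, 0, 0, 0, 0, 0, 1; 0, 0, 0, 0, 0, 0, 1, 0; 0, 1, 0, 0, 0, 0, 0, 0; 1, 0, 0, 0, 0, 0, 0, 0; 0, 0, 0, -1, 0, 0, 0, 0; 0, 0, -1, 0, 0, 0, 0, 0],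
  !![0, 0, 0, 0, 0, 0, 1, 0; 0, 0, 0, 0, 0, 0, 0, 1; 0, 0, 0, 0, 1, 0, 0, 0; 0, 0, 0, 0, 0, 1, 0, 0; 0, 0, -1, 0, 0, 0, 0, 0; 0, 0, 0, -1, 0, 0, 0, 0; -1, 0, 0, 0, 0, 0, 0, 0; 0, -1, 0, 0, 0, 0, 0, 0],
  !![0, 0, 0, 0, 0, 0, 0, -1; 0, 0, 0, 0, 0, 0, 1, 0; 0, 0, 0, 0, 0, -1, 0, 0; 0, 0, 0, 0, 1, 0, 0, 0; 0, 0, 0, -1, 0, 0, 0, 0; 0, 0, 1, 0, 0, 0, 0, 0; 0, -1, 0, 0, 0, 0, 0, 0; 1, 0, 0, 0, 0, 0, 0, 0],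
  !![0, 1, 0, 0, 0, 0, 0, 0; -1, 0, 0, 0, 0, 0, 0, 0; 0, 0, 0, -1, 0, 0, 0, 0; 0, 0, 1, 0, 0, 0, 0, 0; 0, 0, 0, 0, 0, 1, 0, 0; 0, 0, 0, 0, -1, 0, 0, 0; 0, 0, 0, 0, 0, 0, 0, -1; 0, 0, 0, 0, 0, 0, 1, 0],
  !![-1, 0, 0, 0, 0, 0, 0, 0; 0, -1, 0, 0, 0, 0, 0, 0; 0, 0, -1, 0, 0, 0, 0, 0; 0, 0, 0, -1, 0, 0, 0, 0; 0, 0, 0, 0, -1, 0, 0, 0; 0, 0, 0, 0, 0, -1, 0, 0; 0, 0, 0, 0, 0, 0, -1, 0; 0, 0, 0, 0, 0, 0, 0, -1],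
  !![0, 0, 1, 0, 0, 0, 0, 0; 0, 0, 0, 1, 0, 0, 0, 0; -1, 0, 0, 0, 0, 0, 0, 0; 0, -1, 0, 0, 0, 0, 0, 0; 0, 0, 0, 0, 0, 0, 1, 0; 0, 0, 0, 0, 0, 0, 0, 1; 0, 0, 0, 0, -1, 0, 0, 0; 0, 0, 0, 0, 0, -1, 0, 0]],
 ![!![0, 0, 0, 0, 0, 0, 1, 0; 0, 0, 0, 0, 0, 0, 0, -1; 0, 0, 0, 0, 1, 0, 0, 0; 0, 0, 0, 0, 0, -1, 0, 0; 0, 0, -1, 0, 0, 0, 0, 0; 0, 0, 0, 1, 0, 0, 0, 0; -1, 0, 0, 0, 0, 0, 0, 0; 0, 1, 0, 0, 0, 0, 0, 0],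
  !![0, 0, 0, 0, 0, 0, 0, 1; 0, 0, 0, 0, 0, 0, 1, 0; 0, 0, 0, 0, 0, 1, 0, 0; 0, 0, 0, 0, 1, 0, 0, 0; 0, 0, 0, -1, 0, 0, 0, 0; 0, 0, -1, 0, 0, 0, 0, 0; 0, -1, 0, 0, 0, 0, 0, 0; -1, 0, 0, 0, 0, 0, 0, 0],
  !![0, 0, 0, 0, 1, 0, 0, 0; 0, 0, 0, 0, 0, 1, 0, 0; 0, 0, 0, 0, 0, 0, -1, 0; 0, 0, 0, 0, 0, 0, 0, -1; -1, 0, 0, 0, 0, 0, 0, 0; 0, -1, 0, 0, 0, 0, 0, 0; 0, 0, 1, 0, 0, 0, 0, 0; 0, 0, 0, 1, 0, 0, 0, 0],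
  !![0, 0, 0, 0, 0, -1, 0, 0; 0, 0, 0, 0, 1, 0, 0, 0; 0, 0, 0, 0, 0, 0, 0, 1; 0, 0, 0, 0, 0, 0, -1, 0; 0, -1, 0, 0, 0, 0, 0, 0; 1, 0, 0, 0, 0, 0, 0, 0; 0, 0, 0, 1, 0, 0, 0, 0; 0, 0, -1, 0, 0, 0, 0, 0],
  !![0, 0, 0, -1, 0, 0, 0, 0; 0, 0, 1, 0, 0, 0, 0, 0; 0, -1, 0, 0, 0, 0, 0, 0; 1, 0, 0, 0, 0, 0, 0, 0; 0, 0, 0, 0, 0, 0, 0, -1; 0, 0, 0, 0, 0, 0, 1, 0; 0, 0, 0, 0, 0, -1, 0, 0; 0, 0, 0, 0, 1, 0, 0, 0],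
  !![0, 0, -1, 0, 0, 0, 0, 0; 0, 0, 0, -1, 0, 0, 0, 0; 1, 0, 0, 0, 0, 0, 0, 0; 0, 1, 0, 0, 0, 0, 0, 0; 0, 0, 0, 0, 0, 0, -1, 0; 0, 0, 0, 0, 0, 0, 0, -1; 0, 0, 0, 0, 1, 0, 0, 0; 0, 0, 0, 0, 0, 1, 0, 0],
  !![-1, 0, 0, 0, 0, 0, 0, 0; 0, -1, 0, 0, 0, 0, 0, 0; 0, 0, -1, 0, 0, 0, 0, 0; 0, 0, 0, -1, 0, 0, 0, 0; 0, 0, 0, 0, -1, 0, 0, 0; 0, 0, 0, 0, 0, -1, 0, 0; 0, 0, 0, 0, 0, 0, -1, 0; 0, 0, 0, 0, 0, 0, 0, -1]]]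
def EEZ (i j : Fin 8) : Matrix (Fin 8) (Fin 8) ℤ :=
  Matrix.single j i 1 - Matrix.single i j 1

def castM : Matrix (Fin 8) (Fin 8) ℤ →+* M8 := (Int.castRingHom ℝ).mapMatrix

lemma castM_apply (M : Matrix (Fin 8) (Fin 8) ℤ) (r c : Fin 8) :
    castM M r c = (M r c : ℝ) := rfl

lemma cast_std (i j : Fin 8) :
    castM (Matrix.single i j 1) = Matrix.single i j 1 := by
  ext r c
  simp [castM_apply, Matrix.single, Matrix.of_apply, apply_ite (Int.cast : ℤ → ℝ)]

lemma cast_EE (i j : Fin 8) : castM (EEZ i j) = EE i j := by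
  simp [EEZ, EE, map_sub, cast_std]

lemma eZ_eq : ∀ i : Fin 7, eZ i =
    ![EEZ 0 7 + EEZ 1 6 - EEZ 2 5 - EEZ 3 4,
      -EEZ 0 6 + EEZ 1 7 + EEZ 2 4 - EEZ 3 5,
      -EEZ 0 5 + EEZ 1 4 - EEZ 2 7 + EEZ 3 6,
      -EEZ 0 4 - EEZ 1 5 - EEZ 2 6 - EEZ 3 7,
      -EEZ 0 2 - EEZ 1 3 + EEZ 4 6 + EEZ 5 7,
      EEZ 0 3 - EEZ 1 2 - EEZ 4 7 + EEZ 5 6,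
      EEZ 0 1 - EEZ 2 3 - EEZ 4 5 + EEZ 6 7] i := by decide

lemma e_eq (i : Fin 7) : e i = castM (eZ i) := by
  rw [eZ_eq]; fin_cases i
  · show EE 0 7 + EE 1 6 - EE 2 5 - EE 3 4 = castM (EEZ 0 7 + EEZ 1 6 - EEZ 2 5 - EEZ 3 4)
    simp [map_add, map_sub, map_neg, cast_EE]
  · show -EE 0 6 + EE 1 7 + EE 2 4 - EE 3 5 = castM (-EEZ 0 6 + EEZ 1 7 + EEZ 2 4 - EEZ 3 5)
    simp [map_add, map_sub, map_neg, cast_EE]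
  · show -EE 0 5 + EE 1 4 - EE 2 7 + EE 3 6 = castM (-EEZ 0 5 + EEZ 1 4 - EEZ 2 7 + EEZ 3 6)
    simp [map_add, map_sub, map_neg, cast_EE]
  · show -EE 0 4 - EE 1 5 - EE 2 6 - EE 3 7 = castM (-EEZ 0 4 - EEZ 1 5 - EEZ 2 6 - EEZ 3 7)
    simp [map_add, map_sub, map_neg, cast_EE]
  · show -EE 0 2 - EE 1 3 + EE 4 6 + EE 5 7 = castM (-EEZ 0 2 - EEZ 1 3 + EEZ 4 6 + EEZ 5 7)
    simp [map_add, map_sub, map_neg, cast_EE]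
  · show EE 0 3 - EE 1 2 - EE 4 7 + EE 5 6 = castM (EEZ 0 3 - EEZ 1 2 - EEZ 4 7 + EEZ 5 6)
    simp [map_add, map_sub, map_neg, cast_EE]
  · show EE 0 1 - EE 2 3 - EE 4 5 + EE 6 7 = castM (EEZ 0 1 - EEZ 2 3 - EEZ 4 5 + EEZ 6 7)
    simp [map_add, map_sub, map_neg, cast_EE]

set_option maxHeartbeats 8000000 in
lemma hgZ : ∀ i j : Fin 7, eZ i * eZ j = gZ i j := by decide

set_option maxHeartbeats 4000000 in
lemma cliffZ : ∀ i j : Fin 7, gZ i j + gZ j i = if i = j then (-2 : ℤ) • 1 else 0 := by decide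

set_option maxHeartbeats 4000000 in
lemma trZ : ∀ i j : Fin 7, i < j → ∀ k l : Fin 7, k < l →
    Matrix.trace (gZ i j * gZ k l) = if i = k ∧ j = l then -8 else 0 := by decide

set_option maxHeartbeats 1000000 in
lemma gZ00 : ∀ i j : Fin 7, i < j → gZ i j 0 0 = 0 := by decide

def g (i j : Fin 7) : M8 := castM (gZ i j)

lemma g_cast (i j : Fin 7) : g i j = castM (gZ i j) := rfl

lemma hg (i j : Fin 7) : e i * e j = g i j := by
  rw [e_eq, e_eq, ← _root_.map_mul, hgZ]; rfl

lemma trace_castM (M : Matrix (Fin 8) (Fin 8) ℤ) :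
    Matrix.trace (castM M) = ((Matrix.trace M : ℤ) : ℝ) := by
  simp [Matrix.trace, Matrix.diag, castM_apply]

lemma htrace : ∀ i j : Fin 7, i < j → ∀ k l : Fin 7, k < l →
    Matrix.trace (e i * e j * (e k * e l)) =
      if i = k ∧ j = l then (-8 : ℝ) else 0 := by
  intro i j hij k l hkl
  rw [hg, hg, g_cast, g_cast, ← _root_.map_mul, trace_castM, trZ i j hij k l hkl]
  split <;> norm_num

lemma hsq (i : Fin 7) : e i * e i = -1 := by
  have h := cliffZ i i
  rw [if_pos rfl] at h
  have h' : g i i + g i i = (-2 : ℝ) • (1 : M8) := by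
    rw [g_cast, ← map_add, h, map_zsmul, _root_.map_one, ← Int.cast_smul_eq_zsmul ℝ]
    norm_num
  have h2 : (2 : ℝ) • (g i i) = (2 : ℝ) • (-1 : M8) := by
    rw [two_smul, h']; module
  rw [hg]
  exact smul_right_injective M8 two_ne_zero h2

lemma hanti {i j : Fin 7} (h : i ≠ j) : e i * e j = -(e j * e i) := by
  have hz := cliffZ i j
  rw [if_neg h] at hz
  have h' : g i j + g j i = 0 := by
    rw [g_cast, g_cast, ← map_add, hz, map_zero]
  rw [hg, hg]
  exact eq_neg_of_add_eq_zero_left h'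

lemma hsq' (i : Fin 7) (x : M8) : e i * (e i * x) = -x := by
  rw [← mul_assoc, hsq, neg_one_mul]

lemma h1 {i j : Fin 7} (h : i ≠ j) (x : M8) : e i * (e j * x) = -(e j * (e i * x)) := by
  rw [← mul_assoc, hanti h, neg_mul, mul_assoc]

lemma commute_e_pair {a c d : Fin 7} (hac : a ≠ c) (had : a ≠ d) :
    Commute (e a) (e c * e d) := by
  unfold Commute SemiconjBy
  rw [← mul_assoc, hanti hac, neg_mul, mul_assoc, hanti had, mul_neg, neg_neg, mul_assoc]

/-- bracket of two Clifford 2-products is a scalar multiple of one Clifford 2-product -/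
lemma brac {i j k l : Fin 7} (hij : i < j) (hkl : k < l) :
    ∃ (a b : Fin 7) (c : ℝ), a < b ∧
      e i * e j * (e k * e l) - e k * e l * (e i * e j) = c • (e a * e b) := by
  by_cases hik : i = k
  · by_cases hjl : j = l
    · exact ⟨i, j, 0, hij, by rw [hik, hjl, sub_self, zero_smul]⟩
    · -- i = k, j ≠ l : bracket = ±2 e_j e_l
      subst hik
      have hjl' : l ≠ j := Ne.symm hjl
      have hji : j ≠ i := hij.ne'
      have hli : l ≠ i := hkl.ne'
      have hA : e i * e j * (e i * e l) = e j * e l := by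
        rw [mul_assoc, h1 hji, mul_neg, hsq', neg_neg]
      have hB : e i * e l * (e i * e j) = -(e j * e l) := by
        rw [mul_assoc, h1 hli, mul_neg, hsq', neg_neg, hanti hjl']
      rcases lt_or_gt_of_ne hjl with h | h
      · exact ⟨j, l, 2, h, by rw [hA, hB, sub_neg_eq_add, two_smul]⟩
      · refine ⟨l, j, -2, h, ?_⟩
        rw [hA, hB, sub_neg_eq_add, hanti hjl]
        module
  · by_cases hjl : j = l
    · -- j = l, i ≠ k : bracket = ±2 e_i e_k
      subst hjl
      have hji : j ≠ i := hij.ne'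
      have hjk : j ≠ k := hkl.ne'
      have hA : e i * e j * (e k * e j) = e i * e k := by
        rw [mul_assoc, h1 hjk, mul_neg, hsq, mul_neg_one, mul_neg, neg_neg]
      have hB : e k * e j * (e i * e j) = -(e i * e k) := by
        rw [mul_assoc, h1 hji, mul_neg, hsq, mul_neg_one, mul_neg, neg_neg,
          hanti (Ne.symm hik)]
      rcases lt_or_gt_of_ne hik with h | h
      · exact ⟨i, k, 2, h, by rw [hA, hB, sub_neg_eq_add, two_smul]⟩
      · refine ⟨k, i, -2, h, ?_⟩
        rw [hA, hB, sub_neg_eq_add, hanti hik]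
        module
    · by_cases hjk : j = k
      · -- j = k : i < j = k < l, bracket = -2 e_i e_l
        subst hjk
        have hil : i < l := hij.trans hkl
        have hli : l ≠ i := hil.ne'
        have hjl2 : j ≠ l := hkl.ne
        have hji : j ≠ i := hij.ne'
        have hA : e i * e j * (e j * e l) = -(e i * e l) := by
          rw [mul_assoc, hsq', mul_neg]
        have hB : e j * e l * (e i * e j) = e i * e l := by
          rw [mul_assoc, h1 hli, mul_neg, h1 hji, neg_neg, h1 hjl2, mul_neg, hsq,
            mul_neg_one, mul_neg, neg_neg]
        refine ⟨i, l, -2, hil, ?_⟩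
        rw [hA, hB]
        module
      · by_cases hil : i = l
        · -- i = l : k < l = i < j, bracket = 2 e_k e_j
          subst hil
          have hkj : k < j := hkl.trans hij
          have hji : j ≠ i := hij.ne'
          have hjk2 : j ≠ k := hkj.ne'
          have hik' : i ≠ k := fun h => hik h
          have hA : e i * e j * (e k * e i) = e k * e j := by
            rw [mul_assoc, h1 hjk2, mul_neg, h1 hik', neg_neg, h1 hij.ne, mul_neg, hsq,
              mul_neg_one, mul_neg, neg_neg]
          have hB : e k * e i * (e i * e j) = -(e k * e j) := by
            rw [mul_assoc, hsq', mul_neg]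
          refine ⟨k, j, 2, hkj, ?_⟩
          rw [hA, hB, sub_neg_eq_add, two_smul]
        · -- all four distinct : bracket = 0
          have hcomm : Commute (e i * e j) (e k * e l) :=
            Commute.mul_left (commute_e_pair (fun h => hik h) (fun h => hil h))
              (commute_e_pair (fun h => hjk h) (fun h => hjl h))
          exact ⟨i, j, 0, hij, by rw [hcomm.eq, sub_self, zero_smul]⟩

abbrev Idx : Type := {p : Fin 7 × Fin 7 // p.1 < p.2}

def gen (p : Idx) : M8 := e p.1.1 * e p.1.2

def ev : Lam2 →ₗ[ℝ] (Idx → ℝ) where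
  toFun ω := fun p => ω ![u p.1.1, u p.1.2]
  map_add' ω η := by funext p; simp
  map_smul' c ω := by funext p; simp

lemma sigma2_eq (ω : Lam2) : σ2 ω = ∑ p : Idx, ev ω p • gen p := by
  have hr : ∑ p : Idx, ev ω p • gen p =
      ∑ p : Idx, (fun z : Fin 7 × Fin 7 => ω ![u z.1, u z.2] • (e z.1 * e z.2)) ↑p := rfl
  rw [hr, σ2, ← Fintype.sum_prod_type', ← Finset.sum_filter]
  exact Finset.sum_subtype _ (fun z => by simp) _

def Lσ : Lam2 →ₗ[ℝ] M8 := (Fintype.linearCombination ℝ gen).comp ev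

lemma Lσ_eq (ω : Lam2) : Lσ ω = σ2 ω := by
  rw [sigma2_eq]; rfl

def colψ : M8 →ₗ[ℝ] (Fin 8 → ℝ) where
  toFun A := A *ᵥ ψ 0
  map_add' A B := Matrix.add_mulVec A B (ψ 0)
  map_smul' c A := Matrix.smul_mulVec c A (ψ 0)

def L : Lam2 →ₗ[ℝ] (Fin 8 → ℝ) := colψ.comp Lσ

-- evaluation of w2
lemma w2_apply (i j : Fin 7) (X Y : Fin 7 → ℝ) :
    w2 i j ![X, Y] = X i * Y j - X j * Y i := by
  show Matrix.det (Matrix.of fun m => pick2 i j (![X, Y] m)) = _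
  rw [Matrix.det_fin_two]
  simp [pick2, Matrix.of_apply, LinearMap.pi_apply, LinearMap.proj_apply,
    Matrix.cons_val_zero, Matrix.cons_val_one, Matrix.head_cons]

lemma u_apply (i m : Fin 7) : u i m = if m = i then 1 else 0 := by
  rw [u, Pi.single_apply]

lemma ev_w2 (q p : Idx) : ev (w2 q.1.1 q.1.2) p = if p = q then 1 else 0 := by
  obtain ⟨⟨i, j⟩, hq⟩ := q
  obtain ⟨⟨a, b⟩, hp⟩ := p
  simp only at hq hp
  show w2 i j ![u a, u b] = _
  rw [w2_apply]
  simp only [u_apply, Subtype.mk.injEq, Prod.mk.injEq]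
  have ht2 : (if j = a then (1:ℝ) else 0) * (if i = b then 1 else 0) = 0 := by
    rcases eq_or_ne j a with h | h
    · rcases eq_or_ne i b with h' | h'
      · exfalso; subst h; subst h'; exact lt_asymm hp hq
      · rw [if_neg h', mul_zero]
    · rw [if_neg h, zero_mul]
  rw [ht2, sub_zero]
  by_cases h1 : a = i <;> by_cases h2 : b = j
  · subst h1; subst h2; simp
  · subst h1
    rw [if_pos rfl, one_mul, if_neg (fun h => h2 h.symm),
      if_neg (fun h : _ = _ ∧ _ = _ => h2 h.2)]
  · subst h2
    rw [if_pos rfl, mul_one, if_neg (fun h => h1 h.symm),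
      if_neg (fun h : _ = _ ∧ _ = _ => h1 h.1)]
  · rw [if_neg (fun h => h1 h.symm), zero_mul,
      if_neg (fun h : _ = _ ∧ _ = _ => h1 h.1)]

lemma ev_surj : Function.Surjective ev := by
  intro v
  refine ⟨∑ q : Idx, v q • w2 q.1.1 q.1.2, ?_⟩
  funext p
  rw [map_sum]
  simp only [_root_.map_smul, Finset.sum_apply, Pi.smul_apply, ev_w2, smul_eq_mul,
    mul_ite, mul_one, mul_zero]
  rw [Finset.sum_ite_eq Finset.univ p v]
  simp

lemma ev_ker (ω : Lam2) (h : ev ω = 0) : ω = 0 := by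
  have hval : ∀ a b : Fin 7, a < b → ω ![u a, u b] = 0 := fun a b hab =>
    congrFun h ⟨(a, b), hab⟩
  refine Module.Basis.ext_alternating (Pi.basisFun ℝ (Fin 7)) fun v hv => ?_
  rw [AlternatingMap.zero_apply]
  have hfun : (fun m : Fin 2 => (Pi.basisFun ℝ (Fin 7)) (v m)) = ![u (v 0), u (v 1)] := by
    funext m; fin_cases m <;> simp [u, Pi.basisFun_apply]
  rw [hfun]
  rcases lt_trichotomy (v 0) (v 1) with hlt | heq | hgt
  · exact hval _ _ hlt
  · exact absurd (hv heq) (by decide)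
  · have hswap : (![u (v 0), u (v 1)] : Fin 2 → Fin 7 → ℝ) =
        ![u (v 1), u (v 0)] ∘ Equiv.swap 0 1 := by
      funext m; fin_cases m <;>
        simp [Equiv.swap_apply_left, Equiv.swap_apply_right]
    rw [hswap, AlternatingMap.map_swap _ _ (by decide : (0 : Fin 2) ≠ 1), hval _ _ hgt,
      neg_zero]

lemma ev_inj : Function.Injective ev := by
  intro x y hxy
  have := ev_ker (x - y) (by rw [map_sub, hxy, sub_self])
  exact sub_eq_zero.mp this

def eqv : Lam2 ≃ₗ[ℝ] (Idx → ℝ) := LinearEquiv.ofBijective ev ⟨ev_inj, ev_surj⟩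

lemma trace_gen (p q : Idx) : Matrix.trace (gen p * gen q) = if p = q then (-8 : ℝ) else 0 := by
  have h := htrace p.1.1 p.1.2 p.2 q.1.1 q.1.2 q.2
  rw [gen, gen, h]
  exact if_congr (by rw [Subtype.ext_iff, Prod.ext_iff]) rfl rfl

lemma Lσ_ker (ω : Lam2) (h : Lσ ω = 0) : ω = 0 := by
  apply ev_ker
  funext q
  have h0 : Matrix.trace (σ2 ω * gen q) = 0 := by
    rw [← Lσ_eq, h, zero_mul, Matrix.trace_zero]
  rw [sigma2_eq, Finset.sum_mul, Matrix.trace_sum] at h0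
  simp only [smul_mul_assoc, Matrix.trace_smul, trace_gen, smul_eq_mul, mul_ite, mul_zero] at h0
  rw [Finset.sum_ite_eq' Finset.univ q] at h0
  simp only [Finset.mem_univ, if_true] at h0
  have : ev ω q = 0 := by linarith
  simpa using this

lemma Lσ_inj : Function.Injective Lσ := by
  intro x y hxy
  have := Lσ_ker (x - y) (by rw [map_sub, hxy, sub_self])
  exact sub_eq_zero.mp this

def T : (Idx → ℝ) →ₗ[ℝ] (Fin 8 → ℝ) := colψ.comp (Fintype.linearCombination ℝ gen)

def L' : Lam2 →ₗ[ℝ] (Fin 8 → ℝ) := L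

def U : Submodule ℝ (Fin 8 → ℝ) := LinearMap.ker (LinearMap.proj (R := ℝ) (φ := fun _ : Fin 8 => ℝ) 0)

lemma hU7 : Module.finrank ℝ U = 7 := by
  show Module.finrank ℝ (LinearMap.ker (LinearMap.proj (R := ℝ) (φ := fun _ : Fin 8 => ℝ) 0)) = 7
  have h := (LinearMap.proj (R := ℝ) (φ := fun _ : Fin 8 => ℝ) 0).finrank_range_add_finrank_ker
  have hsurj : LinearMap.range (LinearMap.proj (R := ℝ) (φ := fun _ : Fin 8 => ℝ) 0) = ⊤ :=
    LinearMap.range_eq_top.mpr fun r => ⟨fun _ => r, rfl⟩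
  rw [hsurj, finrank_top, Module.finrank_fintype_fun_eq_card, Module.finrank_self] at h
  simp only [Fintype.card_fin] at h
  omega

lemma col_gen (p : Idx) : colψ (gen p) = fun r => ((gZ p.1.1 p.1.2 r 0 : ℤ) : ℝ) := by
  funext r
  show (gen p *ᵥ ψ 0) r = _
  rw [gen, hg, g_cast, ψ, Matrix.mulVec_single]
  simp [castM_apply]

lemma single_mem_rangeT (k : Fin 8) (x : ℝ) (p : Idx) (c : ℝ)
    (h : ∀ r : Fin 8, ((gZ p.1.1 p.1.2 r 0 : ℤ) : ℝ) = if r = k then c else 0)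
    (hc : c * c = 1) : Pi.single k x ∈ LinearMap.range T := by
  refine ⟨Pi.single p (c * x), ?_⟩
  show colψ (Fintype.linearCombination ℝ gen (Pi.single p (c * x))) = _
  rw [Fintype.linearCombination_apply_single, _root_.map_smul]
  funext r
  rw [Pi.smul_apply]
  simp only [col_gen]
  rw [h r, Pi.single_apply]
  by_cases hr : r = k
  · rw [if_pos hr, if_pos hr, smul_eq_mul]
    have : c * x * c = c * c * x := by ring
    rw [this, hc, one_mul]
  · rw [if_neg hr, if_neg hr, smul_zero]

set_option maxHeartbeats 1000000 in
lemma colf1 : ∀ r : Fin 8, gZ 0 1 r 0 = if r = 1 then 1 else 0 := by decide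
set_option maxHeartbeats 1000000 in
lemma colf2 : ∀ r : Fin 8, gZ 1 3 r 0 = if r = 2 then 1 else 0 := by decide
set_option maxHeartbeats 1000000 in
lemma colf3 : ∀ r : Fin 8, gZ 0 3 r 0 = if r = 3 then -1 else 0 := by decide
set_option maxHeartbeats 1000000 in
lemma colf4 : ∀ r : Fin 8, gZ 2 6 r 0 = if r = 4 then 1 else 0 := by decide
set_option maxHeartbeats 1000000 in
lemma colf5 : ∀ r : Fin 8, gZ 0 4 r 0 = if r = 5 then 1 else 0 := by decide
set_option maxHeartbeats 1000000 in
lemma colf6 : ∀ r : Fin 8, gZ 0 6 r 0 = if r = 6 then 1 else 0 := by decide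
set_option maxHeartbeats 1000000 in
lemma colf7 : ∀ r : Fin 8, gZ 1 6 r 0 = if r = 7 then 1 else 0 := by decide

lemma hTU : LinearMap.range T = U := by
  apply le_antisymm
  · rintro x ⟨v, rfl⟩
    show T v ∈ U
    rw [U, LinearMap.mem_ker]
    show (colψ (Fintype.linearCombination ℝ gen v)) 0 = 0
    rw [Fintype.linearCombination_apply, map_sum, Finset.sum_apply]
    refine Finset.sum_eq_zero fun p _ => ?_
    rw [_root_.map_smul, Pi.smul_apply]
    simp only [col_gen]
    rw [gZ00 _ _ p.2]
    simp
  · intro v hv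
    have hv0 : v 0 = 0 := hv
    rw [← Finset.univ_sum_single v]
    refine Submodule.sum_mem _ fun k _ => ?_
    by_cases hk : k = 0
    · subst hk; rw [hv0, Pi.single_zero]; exact Submodule.zero_mem _
    fin_cases k
    · exact absurd rfl hk
    · exact single_mem_rangeT 1 _ ⟨(0, 1), by decide⟩ 1
        (fun r => by rw [colf1 r]; split <;> norm_num) (by norm_num)
    · exact single_mem_rangeT 2 _ ⟨(1, 3), by decide⟩ 1
        (fun r => by rw [colf2 r]; split <;> norm_num) (by norm_num)
    · exact single_mem_rangeT 3 _ ⟨(0, 3), by decide⟩ (-1)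
        (fun r => by rw [colf3 r]; split <;> norm_num) (by norm_num)
    · exact single_mem_rangeT 4 _ ⟨(2, 6), by decide⟩ 1
        (fun r => by rw [colf4 r]; split <;> norm_num) (by norm_num)
    · exact single_mem_rangeT 5 _ ⟨(0, 4), by decide⟩ 1
        (fun r => by rw [colf5 r]; split <;> norm_num) (by norm_num)
    · exact single_mem_rangeT 6 _ ⟨(0, 6), by decide⟩ 1
        (fun r => by rw [colf6 r]; split <;> norm_num) (by norm_num)
    · exact single_mem_rangeT 7 _ ⟨(1, 6), by decide⟩ 1
        (fun r => by rw [colf7 r]; split <;> norm_num) (by norm_num)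

lemma card_Idx : Fintype.card Idx = 21 := rfl

lemma hkerT : Module.finrank ℝ (LinearMap.ker T) = 14 := by
  have h := T.finrank_range_add_finrank_ker
  rw [hTU, hU7, Module.finrank_fintype_fun_eq_card, card_Idx] at h
  omega

lemma hkerL : Module.finrank ℝ (LinearMap.ker L) = 14 := by
  have h1 : LinearMap.ker L = Submodule.comap (eqv : Lam2 →ₗ[ℝ] (Idx → ℝ)) (LinearMap.ker T) := by
    rw [show L = T.comp (eqv : Lam2 →ₗ[ℝ] (Idx → ℝ)) from rfl, LinearMap.ker_comp]
  rw [h1, Submodule.comap_equiv_eq_map_symm, LinearEquiv.finrank_map_eq]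
  exact hkerT

lemma range_Lσ : LinearMap.range Lσ = Submodule.span ℝ (Set.range gen) := by
  rw [Lσ, LinearMap.range_comp, LinearMap.range_eq_top.mpr ev_surj, Submodule.map_top]
  exact Fintype.range_linearCombination ℝ gen

lemma br_mem : ∀ A ∈ Submodule.span ℝ (Set.range gen), ∀ B ∈ Submodule.span ℝ (Set.range gen),
    A * B - B * A ∈ Submodule.span ℝ (Set.range gen) := by
  intro A hA
  induction hA using Submodule.span_induction with
  | mem x hx =>
    intro B hB
    induction hB using Submodule.span_induction with
    | mem y hy =>
      obtain ⟨p, rfl⟩ := hx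
      obtain ⟨q, rfl⟩ := hy
      obtain ⟨a, b, c, hab, heq⟩ := brac p.2 q.2
      rw [gen, gen, heq]
      exact Submodule.smul_mem _ _ (Submodule.subset_span ⟨⟨(a, b), hab⟩, rfl⟩)
    | zero =>
      have hrw : x * (0 : M8) - 0 * x = 0 := by simp
      rw [hrw]; exact Submodule.zero_mem _
    | add y z hy hz hy' hz' =>
      have hrw : x * (y + z) - (y + z) * x = (x * y - y * x) + (x * z - z * x) := by
        noncomm_ring
      rw [hrw]; exact add_mem hy' hz'
    | smul c y hy hy' =>
      have hrw : x * (c • y) - (c • y) * x = c • (x * y - y * x) := by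
        rw [mul_smul_comm, smul_mul_assoc, smul_sub]
      rw [hrw]; exact Submodule.smul_mem _ _ hy'
  | zero =>
    intro B hB
    have hrw : (0 : M8) * B - B * 0 = 0 := by simp
    rw [hrw]; exact Submodule.zero_mem _
  | add x y hx hy hx' hy' =>
    intro B hB
    have hrw : (x + y) * B - B * (x + y) = (x * B - B * x) + (y * B - B * y) := by
      noncomm_ring
    rw [hrw]; exact add_mem (hx' B hB) (hy' B hB)
  | smul c x hx hx' =>
    intro B hB
    have hrw : (c • x) * B - B * (c • x) = c • (x * B - B * x) := by
      rw [smul_mul_assoc, mul_smul_comm, smul_sub]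
    rw [hrw]; exact Submodule.smul_mem _ _ (hx' B hB)


/-- g₂ = {ω : σ(ω)ψ₁ = 0} is a 14-dimensional subspace of Λ²(ℝ⁷) and its
Clifford image is a 14-dimensional Lie subalgebra of the 8×8 real matrices. -/
theorem stmt_1 :
    ∃ (V : Submodule ℝ Lam2) (W : Submodule ℝ M8),
      (V : Set Lam2) = {ω : Lam2 | σ2 ω *ᵥ ψ 0 = 0} ∧
      Module.finrank ℝ V = 14 ∧
      (W : Set M8) = (fun ω => σ2 ω) '' (V : Set Lam2) ∧
      Module.finrank ℝ W = 14 ∧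
      (∀ A ∈ W, ∀ B ∈ W, A * B - B * A ∈ W) := by
  refine ⟨LinearMap.ker L, Submodule.map Lσ (LinearMap.ker L), ?_, hkerL, ?_, ?_, ?_⟩
  · ext ω
    simp only [SetLike.mem_coe, LinearMap.mem_ker, Set.mem_setOf_eq]
    rw [show L ω = colψ (Lσ ω) from rfl, Lσ_eq]
    exact Iff.rfl
  · rw [Submodule.map_coe]
    exact Set.image_congr fun ω _ => Lσ_eq ω
  · rw [← (Submodule.equivMapOfInjective Lσ Lσ_inj (LinearMap.ker L)).finrank_eq]
    exact hkerL
  · intro A hA B hB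
    obtain ⟨ω, hω, rfl⟩ := Submodule.mem_map.mp hA
    obtain ⟨η, hη, rfl⟩ := Submodule.mem_map.mp hB
    have hωr : Lσ ω ∈ LinearMap.range Lσ := ⟨ω, rfl⟩
    have hηr : Lσ η ∈ LinearMap.range Lσ := ⟨η, rfl⟩
    rw [range_Lσ] at hωr hηr
    have hbr : Lσ ω * Lσ η - Lσ η * Lσ ω ∈ LinearMap.range Lσ := by
      rw [range_Lσ]; exact br_mem _ hωr _ hηr
    obtain ⟨ζ, hζ⟩ := hbr
    refine Submodule.mem_map.mpr ⟨ζ, ?_, hζ⟩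
    rw [LinearMap.mem_ker]
    show colψ (Lσ ζ) = 0
    rw [hζ]
    show (Lσ ω * Lσ η - Lσ η * Lσ ω) *ᵥ ψ 0 = 0
    have hω0 : Lσ ω *ᵥ ψ 0 = 0 := hω
    have hη0 : Lσ η *ᵥ ψ 0 = 0 := hη
    rw [Matrix.sub_mulVec, ← Matrix.mulVec_mulVec, ← Matrix.mulVec_mulVec, hω0, hη0,
      Matrix.mulVec_zero, Matrix.mulVec_zero, sub_zero]
end
end

section
/- Let T = αφ + βT₀ with α, β ∈ ℝ, where T₀ := 4e₁₂₇ − 3e₁₃₅ + 3e₁₄₆ + 3e₂₃₆ + 3e₂₄₅ + 4e₃₄₇ + 4e₅₆₇. Then σ(T)² acts as a scalar on span{ψ₁, ψ₂} (i.e. there is λ ∈ ℝ with σ(T)²ψ₁ = λψ₁ and σ(T)²ψ₂ = λψ₂) if and only if T lies in the union of the two lines ℝ·(e₁₂₇ + e₃₄₇ + e₅₆₇) ∪ ℝ·(−e₁₃₅ + e₁₄₆ + e₂₃₆ + e₂₄₅); equivalently, if and only if α = 3β or α = −4β. (This identifies the set Tor_{su(3)} of admissible torsion forms; in particular Tor_{su(3)}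 ∩ ℝφ = 0 and Tor_{su(3)} ∩ ℝT₀ = 0.) -/
open Matrix BigOperators

noncomputable section

/-- T₀ := 4e₁₂₇ − 3e₁₃₅ + 3e₁₄₆ + 3e₂₃₆ + 3e₂₄₅ + 4e₃₄₇ + 4e₅₆₇ -/
def T0 : Lam3 :=
  (4:ℝ) • w3 0 1 6 - (3:ℝ) • w3 0 2 4 + (3:ℝ) • w3 0 3 5 + (3:ℝ) • w3 1 2 5
    + (3:ℝ) • w3 1 3 4 + (4:ℝ) • w3 2 3 6 + (4:ℝ) • w3 4 5 6

lemma e0def : e 0 = EE 0 7 + EE 1 6 - EE 2 5 - EE 3 4 := rfl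
lemma e1def : e 1 = -EE 0 6 + EE 1 7 + EE 2 4 - EE 3 5 := rfl
lemma e2def : e 2 = -EE 0 5 + EE 1 4 - EE 2 7 + EE 3 6 := rfl
lemma e3def : e 3 = -EE 0 4 - EE 1 5 - EE 2 6 - EE 3 7 := rfl
lemma e4def : e 4 = -EE 0 2 - EE 1 3 + EE 4 6 + EE 5 7 := rfl
lemma e5def : e 5 = EE 0 3 - EE 1 2 - EE 4 7 + EE 5 6 := rfl
lemma e6def : e 6 = EE 0 1 - EE 2 3 - EE 4 5 + EE 6 7 := rfl

lemma eps06 : e 0 *ᵥ ψ 6 = -ψ 1 := by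
  funext r; fin_cases r <;>
  simp (config := { decide := true }) [e0def, EE, ψ, Matrix.mulVec, dotProduct,
    Fin.sum_univ_eight, Matrix.single, Matrix.of_apply, Pi.single_apply]
lemma eps07 : e 0 *ᵥ ψ 7 = -ψ 0 := by
  funext r; fin_cases r <;>
  simp (config := { decide := true }) [e0def, EE, ψ, Matrix.mulVec, dotProduct,
    Fin.sum_univ_eight, Matrix.single, Matrix.of_apply, Pi.single_apply]
lemma eps10 : e 1 *ᵥ ψ 0 = -ψ 6 := by
  funext r; fin_cases r <;>
  simp (config := { decide := true }) [e1def, EE, ψ, Matrix.mulVec, dotProduct,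
    Fin.sum_univ_eight, Matrix.single, Matrix.of_apply, Pi.single_apply]
lemma eps11 : e 1 *ᵥ ψ 1 = ψ 7 := by
  funext r; fin_cases r <;>
  simp (config := { decide := true }) [e1def, EE, ψ, Matrix.mulVec, dotProduct,
    Fin.sum_univ_eight, Matrix.single, Matrix.of_apply, Pi.single_apply]
lemma eps16 : e 1 *ᵥ ψ 6 = ψ 0 := by
  funext r; fin_cases r <;>
  simp (config := { decide := true }) [e1def, EE, ψ, Matrix.mulVec, dotProduct,
    Fin.sum_univ_eight, Matrix.single, Matrix.of_apply, Pi.single_apply]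
lemma eps17 : e 1 *ᵥ ψ 7 = -ψ 1 := by
  funext r; fin_cases r <;>
  simp (config := { decide := true }) [e1def, EE, ψ, Matrix.mulVec, dotProduct,
    Fin.sum_univ_eight, Matrix.single, Matrix.of_apply, Pi.single_apply]
lemma eps22 : e 2 *ᵥ ψ 2 = -ψ 7 := by
  funext r; fin_cases r <;>
  simp (config := { decide := true }) [e2def, EE, ψ, Matrix.mulVec, dotProduct,
    Fin.sum_univ_eight, Matrix.single, Matrix.of_apply, Pi.single_apply]
lemma eps23 : e 2 *ᵥ ψ 3 = ψ 6 := by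
  funext r; fin_cases r <;>
  simp (config := { decide := true }) [e2def, EE, ψ, Matrix.mulVec, dotProduct,
    Fin.sum_univ_eight, Matrix.single, Matrix.of_apply, Pi.single_apply]
lemma eps24 : e 2 *ᵥ ψ 4 = -ψ 1 := by
  funext r; fin_cases r <;>
  simp (config := { decide := true }) [e2def, EE, ψ, Matrix.mulVec, dotProduct,
    Fin.sum_univ_eight, Matrix.single, Matrix.of_apply, Pi.single_apply]
lemma eps25 : e 2 *ᵥ ψ 5 = ψ 0 := by
  funext r; fin_cases r <;>
  simp (config := { decide := true }) [e2def, EE, ψ, Matrix.mulVec, dotProduct,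
    Fin.sum_univ_eight, Matrix.single, Matrix.of_apply, Pi.single_apply]
lemma eps30 : e 3 *ᵥ ψ 0 = -ψ 4 := by
  funext r; fin_cases r <;>
  simp (config := { decide := true }) [e3def, EE, ψ, Matrix.mulVec, dotProduct,
    Fin.sum_univ_eight, Matrix.single, Matrix.of_apply, Pi.single_apply]
lemma eps31 : e 3 *ᵥ ψ 1 = -ψ 5 := by
  funext r; fin_cases r <;>
  simp (config := { decide := true }) [e3def, EE, ψ, Matrix.mulVec, dotProduct,
    Fin.sum_univ_eight, Matrix.single, Matrix.of_apply, Pi.single_apply]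
lemma eps32 : e 3 *ᵥ ψ 2 = -ψ 6 := by
  funext r; fin_cases r <;>
  simp (config := { decide := true }) [e3def, EE, ψ, Matrix.mulVec, dotProduct,
    Fin.sum_univ_eight, Matrix.single, Matrix.of_apply, Pi.single_apply]
lemma eps33 : e 3 *ᵥ ψ 3 = -ψ 7 := by
  funext r; fin_cases r <;>
  simp (config := { decide := true }) [e3def, EE, ψ, Matrix.mulVec, dotProduct,
    Fin.sum_univ_eight, Matrix.single, Matrix.of_apply, Pi.single_apply]
lemma eps40 : e 4 *ᵥ ψ 0 = -ψ 2 := by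
  funext r; fin_cases r <;>
  simp (config := { decide := true }) [e4def, EE, ψ, Matrix.mulVec, dotProduct,
    Fin.sum_univ_eight, Matrix.single, Matrix.of_apply, Pi.single_apply]
lemma eps41 : e 4 *ᵥ ψ 1 = -ψ 3 := by
  funext r; fin_cases r <;>
  simp (config := { decide := true }) [e4def, EE, ψ, Matrix.mulVec, dotProduct,
    Fin.sum_univ_eight, Matrix.single, Matrix.of_apply, Pi.single_apply]
lemma eps42 : e 4 *ᵥ ψ 2 = ψ 0 := by
  funext r; fin_cases r <;>
  simp (config := { decide := true }) [e4def, EE, ψ, Matrix.mulVec, dotProduct,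
    Fin.sum_univ_eight, Matrix.single, Matrix.of_apply, Pi.single_apply]
lemma eps43 : e 4 *ᵥ ψ 3 = ψ 1 := by
  funext r; fin_cases r <;>
  simp (config := { decide := true }) [e4def, EE, ψ, Matrix.mulVec, dotProduct,
    Fin.sum_univ_eight, Matrix.single, Matrix.of_apply, Pi.single_apply]
lemma eps50 : e 5 *ᵥ ψ 0 = ψ 3 := by
  funext r; fin_cases r <;>
  simp (config := { decide := true }) [e5def, EE, ψ, Matrix.mulVec, dotProduct,
    Fin.sum_univ_eight, Matrix.single, Matrix.of_apply, Pi.single_apply]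
lemma eps51 : e 5 *ᵥ ψ 1 = -ψ 2 := by
  funext r; fin_cases r <;>
  simp (config := { decide := true }) [e5def, EE, ψ, Matrix.mulVec, dotProduct,
    Fin.sum_univ_eight, Matrix.single, Matrix.of_apply, Pi.single_apply]
lemma eps60 : e 6 *ᵥ ψ 0 = ψ 1 := by
  funext r; fin_cases r <;>
  simp (config := { decide := true }) [e6def, EE, ψ, Matrix.mulVec, dotProduct,
    Fin.sum_univ_eight, Matrix.single, Matrix.of_apply, Pi.single_apply]
lemma eps61 : e 6 *ᵥ ψ 1 = -ψ 0 := by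
  funext r; fin_cases r <;>
  simp (config := { decide := true }) [e6def, EE, ψ, Matrix.mulVec, dotProduct,
    Fin.sum_univ_eight, Matrix.single, Matrix.of_apply, Pi.single_apply]

lemma w3_eval (i j k a b c : Fin 7) :
    w3 i j k ![u a, u b, u c] =
      Matrix.det (Matrix.of fun m n => (![u a, u b, u c] m) (![i,j,k] n)) := rfl

set_option maxHeartbeats 4000000 in
lemma key (α β : ℝ) : σ3 (α • φf + β • T0) =
    (α+4*β)•(e 0*e 1*e 6) + (α-3*β)•(e 0*e 2*e 4) + (3*β-α)•(e 0*e 3*e 5)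
    + (3*β-α)•(e 1*e 2*e 5) + (3*β-α)•(e 1*e 3*e 4) + (α+4*β)•(e 2*e 3*e 6)
    + (α+4*β)•(e 4*e 5*e 6) := by
  simp (config := { decide := true }) only [σ3, Fin.sum_univ_seven, φf, T0,
    AlternatingMap.add_apply, AlternatingMap.sub_apply, AlternatingMap.smul_apply,
    smul_eq_mul, w3_eval, if_true, if_false]
  simp (config := { decide := true }) only [Matrix.det_fin_three, Matrix.of_apply,
    Matrix.cons_val_zero, Matrix.cons_val_one, Matrix.cons_val_two, Matrix.head_cons,
    Matrix.tail_cons, u, Pi.single_apply, Fin.isValue]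
  norm_num
  module

lemma h0 (α β : ℝ) : σ3 (α • φf + β • T0) *ᵥ ψ 0 = (-(7*α)) • ψ 0 := by
  rw [key]
  simp only [Matrix.add_mulVec, Matrix.smul_mulVec, ← Matrix.mulVec_mulVec,
    eps06, eps07, eps10, eps11, eps16, eps17, eps22, eps23, eps24, eps25, eps30, eps31,
    eps32, eps33, eps40, eps41, eps42, eps43, eps50, eps51, eps60, eps61,
    Matrix.mulVec_neg, smul_neg]
  module

lemma h1_s5 (α β : ℝ) : σ3 (α • φf + β • T0) *ᵥ ψ 1 = (α - 24*β) • ψ 1 := by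
  rw [key]
  simp only [Matrix.add_mulVec, Matrix.smul_mulVec, ← Matrix.mulVec_mulVec,
    eps06, eps07, eps10, eps11, eps16, eps17, eps22, eps23, eps24, eps25, eps30, eps31,
    eps32, eps33, eps40, eps41, eps42, eps43, eps50, eps51, eps60, eps61,
    Matrix.mulVec_neg, smul_neg]
  module

lemma hsq0 (α β : ℝ) : (σ3 (α • φf + β • T0)) ^ 2 *ᵥ ψ 0 = (49*α^2) • ψ 0 := by
  rw [pow_two, ← Matrix.mulVec_mulVec, h0, Matrix.mulVec_smul, h0, smul_smul]
  ring_nf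

lemma hsq1 (α β : ℝ) : (σ3 (α • φf + β • T0)) ^ 2 *ᵥ ψ 1 = ((α-24*β)^2) • ψ 1 := by
  rw [pow_two, ← Matrix.mulVec_mulVec, h1_s5, Matrix.mulVec_smul, h1_s5, smul_smul]
  ring_nf

lemma hmain (α β : ℝ) :
    (∃ lam : ℝ,
        (σ3 (α • φf + β • T0)) ^ 2 *ᵥ ψ 0 = lam • ψ 0 ∧
        (σ3 (α • φf + β • T0)) ^ 2 *ᵥ ψ 1 = lam • ψ 1)
      ↔ (α = 3 * β ∨ α = -4 * β) := by
  constructor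
  · rintro ⟨lam, ha, hb⟩
    rw [hsq0] at ha; rw [hsq1] at hb
    have e1 : 49*α^2 = lam := by
      have := congrFun ha 0
      simpa [ψ, Pi.single_apply] using this
    have e2 : (α-24*β)^2 = lam := by
      have := congrFun hb 1
      simpa [ψ, Pi.single_apply] using this
    have hfac : (α - 3*β) * (α + 4*β) = 0 := by linear_combination (e1 - e2)/48
    rcases mul_eq_zero.mp hfac with h | h
    · left; linarith
    · right; linarith
  · rintro (h | h)
    · refine ⟨49*α^2, hsq0 α β, ?_⟩
      rw [hsq1]
      have : (α-24*β)^2 = 49*α^2 := by rw [h]; ring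
      rw [this]
    · refine ⟨49*α^2, hsq0 α β, ?_⟩
      rw [hsq1]
      have : (α-24*β)^2 = 49*α^2 := by rw [h]; ring
      rw [this]

lemma hline (α β : ℝ) :
    ((∃ r : ℝ, α • φf + β • T0 = r • (w3 0 1 6 + w3 2 3 6 + w3 4 5 6)) ∨
     (∃ r : ℝ, α • φf + β • T0 = r • (-w3 0 2 4 + w3 0 3 5 + w3 1 2 5 + w3 1 3 4)))
    ↔ (α = 3 * β ∨ α = -4 * β) := by
  constructor
  · rintro (⟨r, hr⟩ | ⟨r, hr⟩)
    · left
      have h := congrArg (fun F : Lam3 => F ![u 0, u 2, u 4]) hr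
      simp (config := { decide := true }) only [φf, T0, AlternatingMap.add_apply,
        AlternatingMap.sub_apply, AlternatingMap.smul_apply, AlternatingMap.neg_apply,
        smul_eq_mul, w3_eval] at h
      simp (config := { decide := true }) only [Matrix.det_fin_three, Matrix.of_apply,
        Matrix.cons_val_zero, Matrix.cons_val_one, Matrix.cons_val_two, Matrix.head_cons,
        Matrix.tail_cons, u, Pi.single_apply, Fin.isValue] at h
      norm_num at h
      linarith
    · right
      have h := congrArg (fun F : Lam3 => F ![u 0, u 1, u 6]) hr
      simp (config := { decide := true }) only [φf, T0, AlternatingMap.add_apply,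
        AlternatingMap.sub_apply, AlternatingMap.smul_apply, AlternatingMap.neg_apply,
        smul_eq_mul, w3_eval] at h
      simp (config := { decide := true }) only [Matrix.det_fin_three, Matrix.of_apply,
        Matrix.cons_val_zero, Matrix.cons_val_one, Matrix.cons_val_two, Matrix.head_cons,
        Matrix.tail_cons, u, Pi.single_apply, Fin.isValue] at h
      norm_num at h
      linarith
  · rintro (h | h)
    · left
      refine ⟨7*β, ?_⟩
      subst h
      simp only [φf, T0]
      module
    · right
      refine ⟨7*β, ?_⟩
      subst h
      simp only [φf, T0]
      module

/-- for T = αφ + βT₀, σ(T)² acts as a scalar on span{ψ₁,ψ₂} iff T lies on one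
of the two lines ℝ(e₁₂₇+e₃₄₇+e₅₆₇) ∪ ℝ(−e₁₃₅+e₁₄₆+e₂₃₆+e₂₄₅), iff α = 3β or α = −4β. -/
theorem stmt_5 (α β : ℝ) :
    ((∃ lam : ℝ,
        (σ3 (α • φf + β • T0)) ^ 2 *ᵥ ψ 0 = lam • ψ 0 ∧
        (σ3 (α • φf + β • T0)) ^ 2 *ᵥ ψ 1 = lam • ψ 1)
      ↔ ((∃ r : ℝ, α • φf + β • T0 = r • (w3 0 1 6 + w3 2 3 6 + w3 4 5 6)) ∨
         (∃ r : ℝ, α • φf + β • T0 = r • (-w3 0 2 4 + w3 0 3 5 + w3 1 2 5 + w3 1 3 4)))) ∧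
    ((∃ lam : ℝ,
        (σ3 (α • φf + β • T0)) ^ 2 *ᵥ ψ 0 = lam • ψ 0 ∧
        (σ3 (α • φf + β • T0)) ^ 2 *ᵥ ψ 1 = lam • ψ 1)
      ↔ (α = 3 * β ∨ α = -4 * β)) := by
  refine ⟨(hmain α β).trans (hline α β).symm, hmain α β⟩
end
end
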